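/- Let (X, μ) be a finite measure space, let (δ_n) ⊂ (0, 1/2) with δ_n → 0, let φ_n : X → ℝ be measurable functions converging to φ almost everywhere, and suppose there is C > 0 with ∫_X Φ_{δ_n}(φ_n(x)) dμ(x) ≤ C for all n. Then 0 ≤ φ(x) ≤ 1 for μ-almost every x ∈ X. -/

import Mathlib

open MeasureTheory Filter

/-- The degenerate mobility `M(φ) = φ²(1-φ)²`. -/
noncomputable def M (φ : ℝ) : ℝ := φ ^ 2 * (1 - φ) ^ 2

/-- The truncated (nondegenerate) mobility `M_δ`. -/
noncomputable def Md (δ φ : ℝ) : ℝ :=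
  if φ ≤ δ then M δ else if φ ≤ 1 - δ then M φ else M (1 - δ)

/-- The entropy density with cutoff `Φ_δ(φ) = ∫_{1/2}^{φ} ∫_{1/2}^{s} dr ds / M_δ(r)`. -/
noncomputable def Phid (δ φ : ℝ) : ℝ :=
  ∫ s in (1 / 2 : ℝ)..φ, ∫ r in (1 / 2 : ℝ)..s, 1 / Md δ r

lemma Md_lb {δ : ℝ} (h1 : 0 < δ) (h2 : δ < 1/2) (r : ℝ) :
    δ^2 * (1-δ)^2 ≤ Md δ r := by
  unfold Md M
  split_ifs with h h'
  · exact le_rfl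
  · push_neg at h
    have key : δ * (1 - δ) ≤ r * (1 - r) := by
      nlinarith [mul_nonneg (sub_nonneg.2 h.le) (sub_nonneg.2 (by linarith : r ≤ 1 - δ))]
    nlinarith [mul_self_le_mul_self (by nlinarith : (0:ℝ) ≤ δ * (1 - δ)) key]
  · nlinarith [sq_nonneg δ]

lemma Md_pos {δ : ℝ} (h1 : 0 < δ) (h2 : δ < 1/2) (r : ℝ) : 0 < Md δ r := by
  have h3 : (0:ℝ) < 1 - δ := by linarith
  exact lt_of_lt_of_le (by positivity) (Md_lb h1 h2 r)

lemma measurable_invMd (δ : ℝ) : Measurable fun r => 1 / Md δ r := by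
  have hM : Measurable M := by unfold M; fun_prop
  have : Measurable (Md δ) := by
    unfold Md
    exact Measurable.ite (measurableSet_le measurable_id measurable_const) measurable_const
      (Measurable.ite (measurableSet_le measurable_id measurable_const) hM measurable_const)
  exact measurable_const.div this

lemma intInt_invMd {δ : ℝ} (h1 : 0 < δ) (h2 : δ < 1/2) (a b : ℝ) :
    IntervalIntegrable (fun r => 1 / Md δ r) MeasureTheory.volume a b := by
  rw [intervalIntegrable_iff]
  apply Integrable.mono' (g := fun _ => 1/(δ^2*(1-δ)^2))
    (integrableOn_const measure_Ioc_lt_top.ne)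
    (measurable_invMd δ).aestronglyMeasurable
  refine ae_of_all _ fun r => ?_
  have hp := Md_pos h1 h2 r
  have h3 : (0:ℝ) < 1 - δ := by linarith
  rw [Real.norm_eq_abs, abs_of_nonneg (by positivity)]
  exact one_div_le_one_div_of_le (by positivity) (Md_lb h1 h2 r)

noncomputable def Fd (δ s : ℝ) : ℝ := ∫ r in (1/2 : ℝ)..s, 1 / Md δ r

lemma Fd_cont {δ : ℝ} (h1 : 0 < δ) (h2 : δ < 1/2) : Continuous (Fd δ) :=
  intervalIntegral.continuous_primitive (intInt_invMd h1 h2) _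

lemma Fd_nonneg {δ : ℝ} (h1 : 0 < δ) (h2 : δ < 1/2) {s : ℝ} (hs : 1/2 ≤ s) : 0 ≤ Fd δ s :=
  intervalIntegral.integral_nonneg hs (fun r _ => (one_div_pos.2 (Md_pos h1 h2 r)).le)


lemma Fd_ge {δ : ℝ} (h1 : 0 < δ) (h2 : δ < 1/2) {s : ℝ} (hs : 1 ≤ s) : 1/δ ≤ Fd δ s := by
  have h3 : (0:ℝ) < 1 - δ := by linarith
  have hsplit : Fd δ s =
      (∫ r in (1/2:ℝ)..(1-δ), 1 / Md δ r) + ∫ r in (1-δ:ℝ)..s, 1 / Md δ r :=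
    (intervalIntegral.integral_add_adjacent_intervals (intInt_invMd h1 h2 _ _)
      (intInt_invMd h1 h2 _ _)).symm
  have h4 : (0:ℝ) ≤ ∫ r in (1/2:ℝ)..(1-δ), 1 / Md δ r :=
    intervalIntegral.integral_nonneg (by linarith) (fun r _ => (one_div_pos.2 (Md_pos h1 h2 r)).le)
  have h5 : ∫ r in (1-δ:ℝ)..s, (1/((1-δ)^2*δ^2) : ℝ) ≤ ∫ r in (1-δ:ℝ)..s, 1 / Md δ r := by
    apply intervalIntegral.integral_mono_on (by linarith) intervalIntegrable_const
      (intInt_invMd h1 h2 _ _)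
    intro r hr
    have hr1 : 1 - δ ≤ r := hr.1
    have : Md δ r = (1-δ)^2 * δ^2 := by
      unfold Md M
      rcases eq_or_lt_of_le hr1 with he | hl
      · rw [if_neg (by linarith), if_pos (le_of_eq he.symm), ← he]; ring_nf
      · rw [if_neg (by linarith), if_neg (by linarith)]; ring_nf
    rw [this]
  rw [intervalIntegral.integral_const, smul_eq_mul] at h5
  have e1 : (0:ℝ) < (1-δ)^2*δ^2 := by positivity
  have h6 : (1:ℝ)/δ ≤ (s - (1-δ)) * (1/((1-δ)^2*δ^2)) := by
    rw [div_le_iff₀ h1]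
    calc (1:ℝ) ≤ δ^2/((1-δ)^2*δ^2) := (one_le_div e1).2 (by nlinarith [mul_nonneg (mul_nonneg (mul_nonneg h1.le h1.le) h1.le) (by linarith : (0:ℝ) ≤ 2-δ)])
      _ = δ * (1/((1-δ)^2*δ^2)) * δ := by ring
      _ ≤ (s - (1-δ)) * (1/((1-δ)^2*δ^2)) * δ := by
          have hc := one_div_pos.2 e1
          nlinarith [mul_nonneg (mul_nonneg (by linarith : (0:ℝ) ≤ s - 1) hc.le) h1.le]
  rw [hsplit]; linarith


lemma Fd_nonpos {δ : ℝ} (h1 : 0 < δ) (h2 : δ < 1/2) {s : ℝ} (hs : s ≤ 1/2) : Fd δ s ≤ 0 := by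
  unfold Fd
  rw [intervalIntegral.integral_symm s (1/2)]
  exact neg_nonpos.2 (intervalIntegral.integral_nonneg hs
    (fun r _ => (one_div_pos.2 (Md_pos h1 h2 r)).le))

lemma Fd_le {δ : ℝ} (h1 : 0 < δ) (h2 : δ < 1/2) {s : ℝ} (hs : s ≤ 0) : Fd δ s ≤ -(1/δ) := by
  have h3 : (0:ℝ) < 1 - δ := by linarith
  unfold Fd
  rw [intervalIntegral.integral_symm s (1/2), neg_le, neg_neg]
  have hsplit : (∫ r in s..(1/2:ℝ), 1 / Md δ r) =
      (∫ r in s..δ, 1 / Md δ r) + ∫ r in δ..(1/2:ℝ), 1 / Md δ r :=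
    (intervalIntegral.integral_add_adjacent_intervals (intInt_invMd h1 h2 _ _)
      (intInt_invMd h1 h2 _ _)).symm
  have h4 : (0:ℝ) ≤ ∫ r in δ..(1/2:ℝ), 1 / Md δ r :=
    intervalIntegral.integral_nonneg (by linarith) (fun r _ => (one_div_pos.2 (Md_pos h1 h2 r)).le)
  have h5 : ∫ r in s..δ, (1/(δ^2*(1-δ)^2) : ℝ) ≤ ∫ r in s..δ, 1 / Md δ r := by
    apply intervalIntegral.integral_mono_on (by linarith) intervalIntegrable_const
      (intInt_invMd h1 h2 _ _)
    intro r hr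
    have : Md δ r = δ^2 * (1-δ)^2 := by
      unfold Md M; rw [if_pos hr.2]
    rw [this]
  rw [intervalIntegral.integral_const, smul_eq_mul] at h5
  have e1 : (0:ℝ) < δ^2*(1-δ)^2 := by positivity
  have h6 : (1:ℝ)/δ ≤ (δ - s) * (1/(δ^2*(1-δ)^2)) := by
    rw [div_le_iff₀ h1]
    calc (1:ℝ) ≤ δ^2/(δ^2*(1-δ)^2) := (one_le_div e1).2
          (by nlinarith [mul_nonneg (mul_nonneg (mul_nonneg h1.le h1.le) h1.le) (by linarith : (0:ℝ) ≤ 2-δ)])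
      _ = δ * (1/(δ^2*(1-δ)^2)) * δ := by ring
      _ ≤ (δ - s) * (1/(δ^2*(1-δ)^2)) * δ := by
          have hc := one_div_pos.2 e1
          nlinarith [mul_nonneg (mul_nonneg (by linarith : (0:ℝ) ≤ -s) hc.le) h1.le]
  rw [hsplit]; linarith

lemma Phid_ge_one {δ : ℝ} (h1 : 0 < δ) (h2 : δ < 1/2) {ψ : ℝ} (hψ : 1 ≤ ψ) :
    (ψ - 1)/δ ≤ Phid δ ψ := by
  have hFi : ∀ a b : ℝ, IntervalIntegrable (Fd δ) MeasureTheory.volume a b :=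
    fun a b => (Fd_cont h1 h2).intervalIntegrable a b
  have hP : Phid δ ψ = (∫ s in (1/2:ℝ)..1, Fd δ s) + ∫ s in (1:ℝ)..ψ, Fd δ s :=
    (intervalIntegral.integral_add_adjacent_intervals (hFi _ _) (hFi _ _)).symm
  have h4 : (0:ℝ) ≤ ∫ s in (1/2:ℝ)..1, Fd δ s :=
    intervalIntegral.integral_nonneg (by norm_num)
      (fun s hsx => Fd_nonneg h1 h2 hsx.1)
  have h5 : ∫ s in (1:ℝ)..ψ, (1/δ : ℝ) ≤ ∫ s in (1:ℝ)..ψ, Fd δ s :=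
    intervalIntegral.integral_mono_on hψ intervalIntegrable_const (hFi _ _)
      (fun s hsx => Fd_ge h1 h2 hsx.1)
  rw [intervalIntegral.integral_const, smul_eq_mul] at h5
  rw [hP]
  calc (ψ - 1)/δ = (ψ - 1) * (1/δ) := by ring
    _ ≤ _ := by linarith

lemma Phid_ge_zero' {δ : ℝ} (h1 : 0 < δ) (h2 : δ < 1/2) {ψ : ℝ} (hψ : ψ ≤ 0) :
    (-ψ)/δ ≤ Phid δ ψ := by
  have hFi : ∀ a b : ℝ, IntervalIntegrable (Fd δ) MeasureTheory.volume a b :=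
    fun a b => (Fd_cont h1 h2).intervalIntegrable a b
  have hP : Phid δ ψ = -∫ s in ψ..(1/2:ℝ), Fd δ s := by
    unfold Phid
    rw [intervalIntegral.integral_symm ψ (1/2)]
    rfl
  have hsplit : (∫ s in ψ..(1/2:ℝ), Fd δ s) =
      (∫ s in ψ..(0:ℝ), Fd δ s) + ∫ s in (0:ℝ)..(1/2:ℝ), Fd δ s :=
    (intervalIntegral.integral_add_adjacent_intervals (hFi _ _) (hFi _ _)).symm
  have h4 : (∫ s in (0:ℝ)..(1/2:ℝ), Fd δ s) ≤ 0 := by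
    rw [← neg_nonneg, ← intervalIntegral.integral_neg]
    exact intervalIntegral.integral_nonneg (by norm_num)
      (fun s hsx => neg_nonneg.2 (Fd_nonpos h1 h2 hsx.2))
  have h5 : (∫ s in ψ..(0:ℝ), Fd δ s) ≤ ∫ s in ψ..(0:ℝ), (-(1/δ) : ℝ) :=
    intervalIntegral.integral_mono_on hψ (hFi _ _) intervalIntegrable_const
      (fun s hsx => Fd_le h1 h2 hsx.2)
  rw [intervalIntegral.integral_const, smul_eq_mul] at h5
  rw [hP, hsplit]
  have : (0 - ψ) * -(1/δ) = -((-ψ)/δ) := by ring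
  rw [this] at h5
  linarith

lemma Phid_cont {δ : ℝ} (h1 : 0 < δ) (h2 : δ < 1/2) : Continuous (Phid δ) :=
  intervalIntegral.continuous_primitive
    (fun a b => (Fd_cont h1 h2).intervalIntegrable a b) _


/-- A uniform entropy bound along a vanishing sequence of cutoffs forces the a.e.
limit to satisfy `0 ≤ φ ≤ 1`. -/
theorem ae_limit_between_zero_and_one {X : Type*} [MeasurableSpace X] (μ : Measure X)
    [IsFiniteMeasure μ] (δ : ℕ → ℝ) (hδ : ∀ n, δ n ∈ Set.Ioo (0 : ℝ) (1 / 2))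
    (hδ0 : Tendsto δ atTop (nhds 0))
    (φn : ℕ → X → ℝ) (hφn : ∀ n, Measurable (φn n)) (φ : X → ℝ)
    (hae : ∀ᵐ x ∂μ, Tendsto (fun n => φn n x) atTop (nhds (φ x)))
    (C : ℝ) (hC : 0 < C)
    (hent : ∀ n, ∫⁻ x, ENNReal.ofReal (Phid (δ n) (φn n x)) ∂μ ≤ ENNReal.ofReal C) :
    ∀ᵐ x ∂μ, 0 ≤ φ x ∧ φ x ≤ 1 := by
  have hδn : ∀ n, 0 < δ n := fun n => (hδ n).1
  have hδh : ∀ n, δ n < 1/2 := fun n => (hδ n).2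
  set f : ℕ → X → ENNReal := fun n x => ENNReal.ofReal (Phid (δ n) (φn n x)) with hfdef
  have hfm : ∀ n, Measurable (f n) := fun n =>
    ENNReal.measurable_ofReal.comp (((Phid_cont (hδn n) (hδh n)).measurable).comp (hφn n))
  have hint : ∫⁻ x, liminf (fun n => f n x) atTop ∂μ ≤ ENNReal.ofReal C :=
    le_trans (lintegral_liminf_le hfm)
      (liminf_le_of_frequently_le' (Frequently.of_forall hent))
  have hfin : ∀ᵐ x ∂μ, liminf (fun n => f n x) atTop < ⊤ :=
    ae_lt_top (Measurable.liminf hfm) (lt_of_le_of_lt hint ENNReal.ofReal_lt_top).ne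
  -- δ tends to 0 from the right, so 1/δ → ∞
  have hδ0' : Tendsto δ atTop (nhdsWithin 0 (Set.Ioi 0)) :=
    tendsto_nhdsWithin_iff.2 ⟨hδ0, Eventually.of_forall hδn⟩
  have hinv : Tendsto (fun n => (δ n)⁻¹) atTop atTop := hδ0'.inv_tendsto_nhdsGT_zero
  filter_upwards [hae, hfin] with x hx hfx
  by_contra hcon
  have htop : liminf (fun n => f n x) atTop = ⊤ := by
    rcases lt_or_ge (φ x) 0 with hneg | hpos
    · -- φ x < 0
      set a : ℝ := φ x / 2 with ha
      have haneg : a < 0 := by simp only [ha]; linarith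
      have hev : ∀ᶠ n in atTop, φn n x ≤ a :=
        (hx.eventually_lt_const (by simp only [ha]; linarith)).mono fun n h => h.le
      have hbound : ∀ᶠ n in atTop, ENNReal.ofReal ((-a) * (δ n)⁻¹) ≤ f n x := by
        filter_upwards [hev] with n hn
        apply ENNReal.ofReal_le_ofReal
        calc (-a) * (δ n)⁻¹ = (-a) / δ n := by rw [div_eq_mul_inv]
          _ ≤ (-(φn n x)) / δ n := (div_le_div_iff_of_pos_right (hδn n)).2 (by linarith)
          _ ≤ Phid (δ n) (φn n x) := Phid_ge_zero' (hδn n) (hδh n) (by linarith)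
      have hg : Tendsto (fun n => ENNReal.ofReal ((-a) * (δ n)⁻¹)) atTop (nhds ⊤) :=
        ENNReal.tendsto_ofReal_atTop.comp (hinv.const_mul_atTop (by linarith : (0:ℝ) < -a))
      have : (⊤ : ENNReal) ≤ liminf (fun n => f n x) atTop := by
        rw [← hg.liminf_eq]
        exact liminf_le_liminf hbound
      exact top_le_iff.1 this
    · -- 1 < φ x
      push_neg at hcon
      have h1 : 1 < φ x := hcon hpos
      set a : ℝ := (1 + φ x) / 2 with ha
      have ha1 : 1 < a := by simp only [ha]; linarith
      have hev : ∀ᶠ n in atTop, a ≤ φn n x :=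
        (hx.eventually_const_lt (by simp only [ha]; linarith)).mono fun n h => h.le
      have hbound : ∀ᶠ n in atTop, ENNReal.ofReal ((a - 1) * (δ n)⁻¹) ≤ f n x := by
        filter_upwards [hev] with n hn
        apply ENNReal.ofReal_le_ofReal
        calc (a - 1) * (δ n)⁻¹ = (a - 1) / δ n := by rw [div_eq_mul_inv]
          _ ≤ (φn n x - 1) / δ n := (div_le_div_iff_of_pos_right (hδn n)).2 (by linarith)
          _ ≤ Phid (δ n) (φn n x) := Phid_ge_one (hδn n) (hδh n) (by linarith)
      have hg : Tendsto (fun n => ENNReal.ofReal ((a - 1) * (δ n)⁻¹)) atTop (nhds ⊤) :=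
        ENNReal.tendsto_ofReal_atTop.comp (hinv.const_mul_atTop (by linarith : (0:ℝ) < a - 1))
      have : (⊤ : ENNReal) ≤ liminf (fun n => f n x) atTop := by
        rw [← hg.liminf_eq]
        exact liminf_le_liminf hbound
      exact top_le_iff.1 this
  rw [htop] at hfx
  exact absurd hfx (lt_irrefl ⊤)
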